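/- Rotation of the lattice (Trotter–Suzuki lattice identity): for every L ≥ 1, every even N ≥ 2, every u ∈ ℂ and all weights d₁, …, d_n ∈ ℂ, with D = diag(d₁, …, d_n) acting on V, the partition function can be evaluated in either direction: Tr_{V^{⊗L}} [ D^{⊗L} · (t(u) t̃(u))^{N/2} ] = Tr_{V^{⊗N}} [ (t_QTM(0))^L ]. -/

import Mathlib

open Complex

/-- The rational `su(n)` R-matrix `R(v) = v·id + P` on `V ⊗ V`, `V = ℂ^n`, in components:
`R(v)^{a′b′}_{ab} = v δ_{a a′} δ_{b b′} + δ_{a′ b} δ_{a b′}`. Row `(a′,b′)`, column `(a,b)`. -/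
noncomputable def Rmat (n : ℕ) (v : ℂ) :
    Matrix (Fin n × Fin n) (Fin n × Fin n) ℂ := fun p q =>
  (if p.1 = q.1 then v else 0) * (if p.2 = q.2 then 1 else 0) +
    (if p.1 = q.2 then 1 else 0) * (if p.2 = q.1 then 1 else 0)

/-- The rotated R-matrix `R̃(v)^{a₁b₁}_{a₂b₂} = R(v)^{b₁a₂}_{b₂a₁}`. -/
noncomputable def Rtilde (n : ℕ) (v : ℂ) :
    Matrix (Fin n × Fin n) (Fin n × Fin n) ℂ := fun p q =>
  Rmat n v (p.2, q.1) (q.2, p.1)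

/-- Cyclic successor `j ↦ j + 1 (mod L)` on `Fin L`. -/
def cyc {L : ℕ} (j : Fin L) : Fin L := ⟨(j.1 + 1) % L, Nat.mod_lt _ j.pos⟩

/-- The row-to-row transfer matrix `t(v)` of the rational `su(n)` model on `V^{⊗L}`. -/
noncomputable def transferMatrix (n L : ℕ) (v : ℂ) :
    Matrix (Fin L → Fin n) (Fin L → Fin n) ℂ := fun α β =>
  ∑ ν : Fin L → Fin n, ∏ j : Fin L, Rmat n v (ν (cyc j), α j) (ν j, β j)

/-- The auxiliary transfer matrix `t̃(v)`, defined from `R̃` by the same formula. -/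
noncomputable def auxTransferMatrix (n L : ℕ) (v : ℂ) :
    Matrix (Fin L → Fin n) (Fin L → Fin n) ℂ := fun α β =>
  ∑ ν : Fin L → Fin n, ∏ j : Fin L, Rtilde n v (ν (cyc j), α j) (ν j, β j)

/-- Site `2k` (1-based), i.e. the `(2k+1)`-th 0-based position, of the QTM chain
of length `N = 2(M+1)`. -/
def eIdx {M : ℕ} (k : Fin (M + 1)) : Fin (2 * (M + 1)) :=
  ⟨2 * k.1 + 1, by have := k.isLt; omega⟩

/-- Site `2k - 1` (1-based), i.e. the `2k`-th 0-based position. -/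
def oIdx {M : ℕ} (k : Fin (M + 1)) : Fin (2 * (M + 1)) :=
  ⟨2 * k.1, by have := k.isLt; omega⟩

/-- The quantum transfer matrix on `V^{⊗N}`, `N = 2(M+1)`, with weights `d`:
`t_QTM(v)^{a}_{b} = Σ_ν d_{ν₁} ∏_{k=1}^{N/2} R(u+iv)^{a_{2k} ν_{2k+1}}_{b_{2k} ν_{2k}}
R̃(u−iv)^{a_{2k−1} ν_{2k}}_{b_{2k−1} ν_{2k−1}}`, with `ν_{N+1} = ν₁`. -/
noncomputable def qtm (n M : ℕ) (u : ℂ) (d : Fin n → ℂ) (v : ℂ) :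
    Matrix (Fin (2 * (M + 1)) → Fin n) (Fin (2 * (M + 1)) → Fin n) ℂ := fun a b =>
  ∑ ν : Fin (2 * (M + 1)) → Fin n,
    d (ν ⟨0, by omega⟩) *
      ∏ k : Fin (M + 1),
        Rmat n (u + I * v) (a (eIdx k), ν (cyc (eIdx k))) (b (eIdx k), ν (eIdx k)) *
          Rtilde n (u - I * v) (a (oIdx k), ν (eIdx k)) (b (oIdx k), ν (oIdx k))

section TSProofAux

open Finset

private lemma cyc_eq {L : ℕ} [NeZero L] (j : Fin L) : cyc j = j + 1 := by
  rcases eq_or_ne L 1 with h | h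
  · subst h; exact Subsingleton.elim _ _
  · have hL2 : 2 ≤ L := by
      have := Nat.pos_of_ne_zero (NeZero.ne L); omega
    apply Fin.ext
    rw [Fin.add_def, Fin.val_one']
    simp [cyc, Nat.mod_eq_of_lt hL2]

private lemma cyc_eIdx {M : ℕ} (k : Fin (M+1)) : cyc (eIdx k) = oIdx (k + 1) := by
  apply Fin.ext
  have hk := k.isLt
  show (2 * k.1 + 1 + 1) % (2 * (M+1)) = 2 * ((k.1 + 1 % (M+1)) % (M+1))
  rcases eq_or_ne k.1 M with h | h
  · rw [h]
    rcases Nat.eq_zero_or_pos M with hM | hM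
    · rw [hM]
    · rw [Nat.mod_eq_of_lt (show 1 < M + 1 by omega),
        show 2*M+1+1 = 2*(M+1) from by ring, Nat.mod_self, Nat.mod_self]
  · have h1 : k.1 < M := by omega
    rw [Nat.mod_eq_of_lt (show 1 < M + 1 by omega),
      Nat.mod_eq_of_lt (show k.1 + 1 < M + 1 by omega),
      Nat.mod_eq_of_lt (show 2*k.1+1+1 < 2*(M+1) by omega)]
    ring

private lemma zero_eq_oIdx {M : ℕ} (h : 0 < 2*(M+1)) :
    (⟨0, h⟩ : Fin (2*(M+1))) = oIdx 0 := by
  apply Fin.ext; simp [oIdx]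

private def interl {n M : ℕ} (p q : Fin (M+1) → Fin n) (t : Fin (2*(M+1))) : Fin n :=
  if _ : t.1 % 2 = 0 then p ⟨t.1/2, by have := t.isLt; omega⟩
  else q ⟨t.1/2, by have := t.isLt; omega⟩

private lemma interl_oIdx {n M : ℕ} (p q : Fin (M+1) → Fin n) (k : Fin (M+1)) :
    interl p q (oIdx k) = p k := by
  have h : (oIdx k).1 % 2 = 0 := by simp [oIdx]
  rw [interl, dif_pos h]
  congr 1
  apply Fin.ext
  show (2 * k.1) / 2 = k.1
  omega

private lemma interl_eIdx {n M : ℕ} (p q : Fin (M+1) → Fin n) (k : Fin (M+1)) :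
    interl p q (eIdx k) = q k := by
  have h : ¬ ((eIdx k).1 % 2 = 0) := by simp [eIdx]
  rw [interl, dif_neg h]
  congr 1
  apply Fin.ext
  show (2 * k.1 + 1) / 2 = k.1
  omega

private lemma interl_comp {n M : ℕ} (f : Fin (2*(M+1)) → Fin n) :
    interl (fun k => f (oIdx k)) (fun k => f (eIdx k)) = f := by
  funext t
  by_cases h : t.1 % 2 = 0
  · rw [interl, dif_pos h]
    congr 1
    apply Fin.ext
    show 2 * (t.1 / 2) = t.1
    omega
  · rw [interl, dif_neg h]
    congr 1
    apply Fin.ext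
    show 2 * (t.1 / 2) + 1 = t.1
    omega

private def snocE (m : ℕ) (ι : Type*) : ((Fin (m+1) → ι) × ι) ≃ (Fin (m+2) → ι) where
  toFun p := Fin.snoc p.1 p.2
  invFun γ := (fun i => γ i.castSucc, γ (Fin.last (m+1)))
  left_inv p := by
    obtain ⟨f, x⟩ := p
    refine Prod.ext ?_ ?_ <;> simp
  right_inv γ := Fin.snoc_init_self γ

private def consE (m : ℕ) (ι : Type*) : ((Fin (m+1) → ι) × ι) ≃ (Fin (m+2) → ι) where
  toFun p := Fin.cons p.2 p.1
  invFun γ := (fun i => γ i.succ, γ 0)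
  left_inv p := by
    obtain ⟨f, x⟩ := p
    refine Prod.ext ?_ ?_ <;> simp
  right_inv γ := Fin.cons_self_tail γ

private lemma trace_mul_pow {ι : Type*} [Fintype ι] [DecidableEq ι] (B : Matrix ι ι ℂ) :
    ∀ (m : ℕ) (A : Matrix ι ι ℂ), Matrix.trace (A * B ^ m) =
      ∑ γ : Fin (m+1) → ι, A (γ (Fin.last m)) (γ 0) *
        ∏ i : Fin m, B (γ i.castSucc) (γ i.succ)
  | 0, A => by
      rw [pow_zero, mul_one,
        show Matrix.trace A = ∑ x : ι, A x x from by simp [Matrix.trace, Matrix.diag]]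
      exact Fintype.sum_equiv (Equiv.funUnique (Fin 1) ι).symm _ _ (fun x => by simp)
  | (m+1), A => by
      rw [pow_succ', ← Matrix.mul_assoc, trace_mul_pow B m (A * B)]
      have key : ∀ γ : Fin (m+1) → ι,
          (A * B) (γ (Fin.last m)) (γ 0) * ∏ i : Fin m, B (γ i.castSucc) (γ i.succ)
          = ∑ x : ι, A ((Fin.cons x γ : Fin (m+2) → ι) (Fin.last (m+1)))
                ((Fin.cons x γ : Fin (m+2) → ι) 0) *
              ∏ i : Fin (m+1), B ((Fin.cons x γ : Fin (m+2) → ι) i.castSucc)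
                ((Fin.cons x γ : Fin (m+2) → ι) i.succ) := by
        intro γ
        rw [Matrix.mul_apply, Finset.sum_mul]
        refine Finset.sum_congr rfl fun x _ => ?_
        rw [Fin.prod_univ_succ]
        simp only [← Fin.succ_castSucc, ← Fin.succ_last, Fin.cons_succ, Fin.castSucc_zero,
          Fin.cons_zero]
        ring
      rw [Finset.sum_congr rfl fun γ _ => key γ]
      exact Eq.trans (Eq.symm (Fintype.sum_prod_type (fun p : (Fin (m+1) → ι) × ι =>
          A ((Fin.cons p.2 p.1 : Fin (m+2) → ι) (Fin.last (m+1)))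
              ((Fin.cons p.2 p.1 : Fin (m+2) → ι) 0) *
            ∏ i : Fin (m+1), B ((Fin.cons p.2 p.1 : Fin (m+2) → ι) i.castSucc)
              ((Fin.cons p.2 p.1 : Fin (m+2) → ι) i.succ))))
        (Equiv.sum_comp (consE m ι) (fun γ' : Fin (m+2) → ι =>
          A (γ' (Fin.last (m+1))) (γ' 0) * ∏ i : Fin (m+1), B (γ' i.castSucc) (γ' i.succ)))

private lemma trace_diag_pow {ι : Type*} [Fintype ι] [DecidableEq ι]
    (w : ι → ℂ) (B : Matrix ι ι ℂ) (m : ℕ) :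
    Matrix.trace (Matrix.diagonal w * B ^ (m+1)) =
      ∑ η : Fin (m+1) → ι, w (η 0) * ∏ i : Fin (m+1), B (η i) (η (cyc i)) := by
  rw [trace_mul_pow B (m+1) (Matrix.diagonal w)]
  rw [← Equiv.sum_comp (snocE m ι) (fun γ : Fin (m+2) → ι =>
      Matrix.diagonal w (γ (Fin.last (m+1))) (γ 0) *
        ∏ i : Fin (m+1), B (γ i.castSucc) (γ i.succ))]
  simp only [snocE, Equiv.coe_fn_mk]
  rw [Fintype.sum_prod_type]
  refine Finset.sum_congr rfl fun η _ => ?_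
  change ∑ x : ι, Matrix.diagonal w ((Fin.snoc η x : Fin (m+2) → ι) (Fin.last (m+1)))
      ((Fin.snoc η x : Fin (m+2) → ι) 0) *
      ∏ i : Fin (m+1), B ((Fin.snoc η x : Fin (m+2) → ι) i.castSucc)
        ((Fin.snoc η x : Fin (m+2) → ι) i.succ) = _
  have hsucc : ∀ i : Fin (m+1), (Fin.snoc η (η 0) : Fin (m+2) → ι) i.succ = η (cyc i) := by
    intro i
    by_cases hi : i.1 = m
    · rw [show i.succ = Fin.last (m+1) from by apply Fin.ext; simp [hi], Fin.snoc_last]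
      congr 1
      apply Fin.ext
      simp [cyc, hi]
    · rw [show i.succ = Fin.castSucc ⟨i.1+1, by omega⟩ from by apply Fin.ext; simp,
        Fin.snoc_castSucc]
      congr 1
      apply Fin.ext
      simp only [cyc]
      exact (Nat.mod_eq_of_lt (by omega)).symm
  simp only [Fin.snoc_last, show (0 : Fin (m+2)) = Fin.castSucc (0 : Fin (m+1)) from rfl,
    Fin.snoc_castSucc, Matrix.diagonal_apply, ite_mul, zero_mul]
  rw [Finset.sum_ite_eq' Finset.univ (η 0)]
  simp only [Finset.mem_univ, if_true]
  congr 1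
  refine Finset.prod_congr rfl fun i _ => ?_
  rw [hsucc]

private noncomputable def wl (n l M : ℕ) (u : ℂ) (d : Fin n → ℂ)
    (x : (Fin (M+1) → (Fin (l+1) → Fin n)) ×
      (Fin (M+1) → ((Fin (l+1) → Fin n) × (Fin (l+1) → Fin n) × (Fin (l+1) → Fin n)))) : ℂ :=
  (∏ j, d (x.1 0 j)) *
    ∏ m, ((∏ j, Rmat n u ((x.2 m).2.1 (j+1), x.1 m j) ((x.2 m).2.1 j, (x.2 m).1 j)) *
      (∏ j, Rtilde n u ((x.2 m).2.2 (j+1), (x.2 m).1 j) ((x.2 m).2.2 j, x.1 (m+1) j)))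

private noncomputable def wr (n l M : ℕ) (u : ℂ) (d : Fin n → ℂ)
    (y : (Fin (l+1) → (Fin (2*(M+1)) → Fin n)) × (Fin (l+1) → (Fin (2*(M+1)) → Fin n))) : ℂ :=
  ∏ j, (d (y.2 j (oIdx 0)) *
    ∏ k, (Rmat n u (y.1 j (eIdx k), y.2 j (oIdx (k+1))) (y.1 (j+1) (eIdx k), y.2 j (eIdx k)) *
      Rtilde n u (y.1 j (oIdx k), y.2 j (eIdx k)) (y.1 (j+1) (oIdx k), y.2 j (oIdx k))))

private def Phi (n l M : ℕ) :
    ((Fin (M+1) → (Fin (l+1) → Fin n)) ×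
      (Fin (M+1) → ((Fin (l+1) → Fin n) × (Fin (l+1) → Fin n) × (Fin (l+1) → Fin n))))
    ≃ ((Fin (l+1) → (Fin (2*(M+1)) → Fin n)) × (Fin (l+1) → (Fin (2*(M+1)) → Fin n))) where
  toFun x :=
    (fun j => interl (fun k => (x.2 (-(k+1))).2.2 (1-j)) (fun k => (x.2 (-(k+1))).2.1 (1-j)),
     fun j => interl (fun k => x.1 (-k) (-j)) (fun k => (x.2 (-(k+1))).1 (-j)))
  invFun y :=
    (fun m jj => y.2 (-jj) (oIdx (-m)),
     fun m => (fun jj => y.2 (-jj) (eIdx (-(m+1))),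
               fun jj => y.1 (1-jj) (eIdx (-(m+1))),
               fun jj => y.1 (1-jj) (oIdx (-(m+1)))))
  left_inv x := by
    obtain ⟨γ, c⟩ := x
    have hm : ∀ m : Fin (M+1), -(-(m+1)+1) = m := fun m => by abel
    have hj : ∀ jj : Fin (l+1), (1:Fin (l+1)) - (1 - jj) = jj := fun jj => by abel
    refine Prod.ext ?_ ?_
    · funext m jj
      dsimp only
      rw [interl_oIdx, neg_neg, neg_neg]
    · funext m
      dsimp only
      refine Prod.ext ?_ (Prod.ext ?_ ?_)
      · funext jj; dsimp only; rw [interl_eIdx, hm, neg_neg]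
      · funext jj; dsimp only; rw [interl_eIdx, hm, hj]
      · funext jj; dsimp only; rw [interl_oIdx, hm, hj]
  right_inv y := by
    obtain ⟨a, ν⟩ := y
    have hm : ∀ k : Fin (M+1), -(-(k+1)+1) = k := fun k => by abel
    have hj : ∀ j : Fin (l+1), (1:Fin (l+1)) - (1 - j) = j := fun j => by abel
    refine Prod.ext ?_ ?_
    · funext j
      dsimp only
      simp only [hm, hj]
      exact interl_comp (a j)
    · funext j
      dsimp only
      simp only [neg_neg, hm]
      exact interl_comp (ν j)

private lemma double_swap (l M : ℕ) (F : Fin (M+1) → Fin (l+1) → ℂ) :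
    (∏ j : Fin (l+1), ∏ k : Fin (M+1), F (-(k+1)) (-j)) =
      ∏ m : Fin (M+1), ∏ jj : Fin (l+1), F m jj := by
  have h1 : ∀ j : Fin (l+1), (∏ k : Fin (M+1), F (-(k+1)) (-j)) = ∏ k, F k (-j) := fun j =>
    Equiv.prod_comp (Function.Involutive.toPerm (fun k : Fin (M+1) => -(k+1))
      (fun k => by
        show -(-(k+1)+1) = k; abel)) (fun k => F k (-j))
  rw [Finset.prod_congr rfl fun j _ => h1 j, Finset.prod_comm]
  refine Finset.prod_congr rfl fun k _ => ?_
  exact Equiv.prod_comp (Function.Involutive.toPerm (fun j : Fin (l+1) => -j)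
    (fun j => by exact neg_neg j)) (fun j => F k j)

private lemma lhs_eq (n l M : ℕ) (u : ℂ) (d : Fin n → ℂ) :
    Matrix.trace
        (Matrix.diagonal (fun α : Fin (l+1) → Fin n => ∏ j, d (α j)) *
          (transferMatrix n (l+1) u * auxTransferMatrix n (l+1) u) ^ (M + 1)) =
      ∑ x : (Fin (M+1) → (Fin (l+1) → Fin n)) ×
          (Fin (M+1) → ((Fin (l+1) → Fin n) × (Fin (l+1) → Fin n) × (Fin (l+1) → Fin n))),
        wl n l M u d x := by
  have hC : ∀ X Y : Fin (l+1) → Fin n,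
      (transferMatrix n (l+1) u * auxTransferMatrix n (l+1) u) X Y =
        ∑ z : ((Fin (l+1) → Fin n) × (Fin (l+1) → Fin n) × (Fin (l+1) → Fin n)),
          ((∏ j, Rmat n u (z.2.1 (j+1), X j) (z.2.1 j, z.1 j)) *
            (∏ j, Rtilde n u (z.2.2 (j+1), z.1 j) (z.2.2 j, Y j))) := by
    intro X Y
    rw [Matrix.mul_apply]
    simp only [transferMatrix, auxTransferMatrix, cyc_eq]
    simp only [Finset.sum_mul_sum]
    simp only [Fintype.sum_prod_type]
  have step : ∀ η : Fin (M+1) → (Fin (l+1) → Fin n),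
      (∏ j, d (η 0 j)) *
        ∏ m, (transferMatrix n (l+1) u * auxTransferMatrix n (l+1) u) (η m) (η (m+1))
      = ∑ c : Fin (M+1) → ((Fin (l+1) → Fin n) × (Fin (l+1) → Fin n) × (Fin (l+1) → Fin n)),
          wl n l M u d (η, c) := by
    intro η
    rw [Finset.prod_congr rfl fun m _ => hC (η m) (η (m+1))]
    rw [Finset.prod_univ_sum (fun _ => Finset.univ), Fintype.piFinset_univ, Finset.mul_sum]
    rfl
  rw [trace_diag_pow]
  simp only [cyc_eq]
  rw [Finset.sum_congr rfl fun η _ => step η]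
  exact Eq.symm (Fintype.sum_prod_type (wl n l M u d))

private lemma rhs_eq (n l M : ℕ) (u : ℂ) (d : Fin n → ℂ) :
    Matrix.trace ((qtm n M u d 0) ^ (l+1)) =
      ∑ y : (Fin (l+1) → (Fin (2*(M+1)) → Fin n)) × (Fin (l+1) → (Fin (2*(M+1)) → Fin n)),
        wr n l M u d y := by
  have hQ : ∀ a b : Fin (2*(M+1)) → Fin n, qtm n M u d 0 a b =
      ∑ ν : Fin (2*(M+1)) → Fin n, d (ν (oIdx 0)) *
        ∏ k, (Rmat n u (a (eIdx k), ν (oIdx (k+1))) (b (eIdx k), ν (eIdx k)) *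
          Rtilde n u (a (oIdx k), ν (eIdx k)) (b (oIdx k), ν (oIdx k))) := by
    intro a b
    simp only [qtm, mul_zero, add_zero, sub_zero, cyc_eIdx, zero_eq_oIdx]
  have step : ∀ η : Fin (l+1) → (Fin (2*(M+1)) → Fin n),
      (1:ℂ) * ∏ j, qtm n M u d 0 (η j) (η (j+1)) =
        ∑ ν : Fin (l+1) → (Fin (2*(M+1)) → Fin n), wr n l M u d (η, ν) := by
    intro η
    rw [one_mul, Finset.prod_congr rfl fun j _ => hQ (η j) (η (j+1))]
    rw [Finset.prod_univ_sum (fun _ => Finset.univ), Fintype.piFinset_univ]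
    rfl
  rw [← one_mul ((qtm n M u d 0) ^ (l+1)), ← Matrix.diagonal_one, trace_diag_pow]
  simp only [cyc_eq, Pi.one_apply]
  rw [Finset.sum_congr rfl fun η _ => step η]
  exact Eq.symm (Fintype.sum_prod_type (wr n l M u d))

private lemma sums_eq (n l M : ℕ) (u : ℂ) (d : Fin n → ℂ) :
    (∑ x : (Fin (M+1) → (Fin (l+1) → Fin n)) ×
        (Fin (M+1) → ((Fin (l+1) → Fin n) × (Fin (l+1) → Fin n) × (Fin (l+1) → Fin n))),
      wl n l M u d x) =
    ∑ y : (Fin (l+1) → (Fin (2*(M+1)) → Fin n)) × (Fin (l+1) → (Fin (2*(M+1)) → Fin n)),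
      wr n l M u d y := by
  refine Fintype.sum_equiv (Phi n l M) _ _ ?_
  rintro ⟨γ, c⟩
  simp only [wl, wr, Phi, Equiv.coe_fn_mk]
  simp only [interl_oIdx, interl_eIdx, neg_zero]
  conv_rhs => rw [Finset.prod_mul_distrib]
  congr 1
  · exact (Equiv.prod_comp (Function.Involutive.toPerm (fun j : Fin (l+1) => -j)
      (fun j => by exact neg_neg j)) (fun j => d (γ 0 j))).symm
  · refine Eq.trans (Finset.prod_congr rfl fun m _ => (Finset.prod_mul_distrib).symm) ?_
    rw [← double_swap l M (fun m jj =>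
      Rmat n u ((c m).2.1 (jj+1), γ m jj) ((c m).2.1 jj, (c m).1 jj) *
        Rtilde n u ((c m).2.2 (jj+1), (c m).1 jj) ((c m).2.2 jj, γ (m+1) jj))]
    refine Finset.prod_congr rfl fun j _ => Finset.prod_congr rfl fun k _ => ?_
    have e1 : (1 : Fin (l+1)) - j = -j + 1 := by abel
    have e2 : (1 : Fin (l+1)) - (j+1) = -j := by abel
    have e3 : -k = -(k+1) + 1 := by abel
    rw [e1, e2, e3]

end TSProofAux

/-- Rotation of the lattice (Trotter–Suzuki lattice identity): for `N = 2(M+1)` even and any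
weights `d`, with `D^{⊗L}` the diagonal matrix with entries `∏_j d_{α_j}`:
`Tr_{V^{⊗L}} [ D^{⊗L} (t(u) t̃(u))^{N/2} ] = Tr_{V^{⊗N}} [ t_QTM(0)^L ]`. -/

theorem trotter_suzuki_rotation (n L M : ℕ) (hn : 1 ≤ n) (hL : 1 ≤ L) (u : ℂ)
    (d : Fin n → ℂ) :
    Matrix.trace
        (Matrix.diagonal (fun α : Fin L → Fin n => ∏ j, d (α j)) *
          (transferMatrix n L u * auxTransferMatrix n L u) ^ (M + 1)) =
      Matrix.trace ((qtm n M u d 0) ^ L) := by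
  obtain ⟨l, rfl⟩ : ∃ l, L = l + 1 := ⟨L - 1, by omega⟩
  rw [lhs_eq n l M u d, rhs_eq n l M u d, sums_eq n l M u d]
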